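/- arXiv:1401.0430 — 3 statements merged into one kernel-verified Lean document; each statement's English description precedes it below -/
import Mathlib

section
/- Let R be an (v+w)×(v+w) Hermitian positive definite matrix partitioned into blocks R11, R12, R21, R22, let H1d (N_R × v) and H2d (N_R × w) be complex matrices, and let R̂ be the block matrix with blocks R̂11 = R11 + (1/N_R) H1d^H H1d, R̂12 = R12 + (1/N_R) H1d^H H2d, R̂21 = R̂12^H, R̂22 = R22 + (1/N_R) H2d^H H2d. Then the Schur complement of R̂22 in R̂ equals the Schur complement of R22 in R if and only if H1d = H2d R22^{-1} R21. -/
open Matrix ComplexOrder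

private lemma canc1 {w p : ℕ} {A B : Matrix (Fin w) (Fin w) ℂ} (h : B * A = 1)
    (t : Matrix (Fin w) (Fin p) ℂ) : B * (A * t) = t := by
  rw [← Matrix.mul_assoc, h, Matrix.one_mul]

set_option maxHeartbeats 1000000 in
lemma schur_key {v w n : ℕ} (B : Matrix (Fin v) (Fin w) ℂ) (C : Matrix (Fin w) (Fin v) ℂ)
    (A : Matrix (Fin w) (Fin w) ℂ) (F : Matrix (Fin n) (Fin v) ℂ) (K : Matrix (Fin n) (Fin w) ℂ)
    (hCB : Cᴴ = B) (hA : A.PosDef) :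
    (B + Fᴴ * K) * (A + Kᴴ * K)⁻¹ * (B + Fᴴ * K)ᴴ
      = B * A⁻¹ * C + Fᴴ * F -
        (F - K * (A⁻¹ * C))ᴴ * (1 - K * ((A + Kᴴ * K)⁻¹ * Kᴴ)) * (F - K * (A⁻¹ * C)) := by
  have hBC : Bᴴ = C := by rw [← hCB, conjTranspose_conjTranspose]
  have hdet : IsUnit A.det := hA.det_pos.ne'.isUnit
  have hXA : A⁻¹ * A = 1 := nonsing_inv_mul _ hdet
  have hAX : A * A⁻¹ = 1 := mul_nonsing_inv _ hdet
  have hXh : A⁻¹ᴴ = A⁻¹ := hA.1.inv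
  have hApd : (A + Kᴴ * K).PosDef := hA.add_posSemidef (posSemidef_conjTranspose_mul_self K)
  have hAdet : IsUnit (A + Kᴴ * K).det := hApd.det_pos.ne'.isUnit
  obtain ⟨E, hE⟩ : ∃ E, E = F - K * (A⁻¹ * C) := ⟨_, rfl⟩
  rw [← hE]
  have hF : F = E + K * (A⁻¹ * C) := by rw [hE]; abel
  have hEt : Eᴴ = Fᴴ - B * (A⁻¹ * Kᴴ) := by
    rw [hE]
    simp [conjTranspose_sub, conjTranspose_mul, hXh, hCB, Matrix.mul_assoc]
  have hFt : Fᴴ = Eᴴ + B * (A⁻¹ * Kᴴ) := by rw [hEt]; abel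
  obtain ⟨Z, hZ⟩ : ∃ Z, Z = A + Kᴴ * K := ⟨_, rfl⟩
  rw [← hZ]
  have hZherm : Zᴴ = Z := by rw [hZ]; exact hApd.1.eq
  have hYZ : Z⁻¹ * Z = 1 := by rw [hZ]; exact nonsing_inv_mul _ hAdet
  have hZY : Z * Z⁻¹ = 1 := by rw [hZ]; exact mul_nonsing_inv _ hAdet
  have hZXC : Z * (A⁻¹ * C) = C + Kᴴ * (K * (A⁻¹ * C)) := by
    rw [hZ]
    simp only [Matrix.add_mul, Matrix.mul_assoc, canc1 hAX]
  have hBhat : B + Fᴴ * K = B * (A⁻¹ * Z) + Eᴴ * K := by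
    rw [hZ, hEt]
    simp only [Matrix.mul_add, Matrix.sub_mul, canc1 hXA, hXA, Matrix.mul_one,
      Matrix.mul_assoc]
    abel
  have hBhatT : (B + Fᴴ * K)ᴴ = Z * (A⁻¹ * C) + Kᴴ * E := by
    rw [hBhat]
    simp [conjTranspose_add, conjTranspose_mul, hXh, hBC, hZherm, Matrix.mul_assoc]
  calc (B + Fᴴ * K) * Z⁻¹ * (B + Fᴴ * K)ᴴ
      = (B * (A⁻¹ * Z) + Eᴴ * K) * (Z⁻¹ * (Z * (A⁻¹ * C) + Kᴴ * E)) := by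
        rw [hBhatT, hBhat, Matrix.mul_assoc]
    _ = B * A⁻¹ * C + Fᴴ * F - Eᴴ * (1 - K * (Z⁻¹ * Kᴴ)) * E := by
        rw [hFt, hF]
        simp only [Matrix.mul_add, Matrix.add_mul, Matrix.mul_sub, Matrix.sub_mul,
          Matrix.mul_one, Matrix.one_mul, Matrix.mul_assoc, canc1 hYZ, canc1 hZY]
        simp only [hZXC, Matrix.mul_add, Matrix.add_mul, Matrix.mul_assoc]
        abel

set_option maxHeartbeats 1000000 in
lemma schur_P_posdef {w n : ℕ} (A : Matrix (Fin w) (Fin w) ℂ) (K : Matrix (Fin n) (Fin w) ℂ)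
    (hA : A.PosDef) : (1 - K * ((A + Kᴴ * K)⁻¹ * Kᴴ)).PosDef := by
  have hdet : IsUnit A.det := hA.det_pos.ne'.isUnit
  have hAX : A * A⁻¹ = 1 := mul_nonsing_inv _ hdet
  have hApd : (A + Kᴴ * K).PosDef := hA.add_posSemidef (posSemidef_conjTranspose_mul_self K)
  have hAdet : IsUnit (A + Kᴴ * K).det := hApd.det_pos.ne'.isUnit
  obtain ⟨Z, hZ⟩ : ∃ Z, Z = A + Kᴴ * K := ⟨_, rfl⟩
  rw [← hZ]
  have hYZ : Z⁻¹ * Z = 1 := by rw [hZ]; exact nonsing_inv_mul _ hAdet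
  have hKK : Kᴴ * (K * (A⁻¹ * Kᴴ)) = Z * (A⁻¹ * Kᴴ) - Kᴴ := by
    rw [hZ]
    simp only [Matrix.add_mul, Matrix.mul_assoc, canc1 hAX]
    abel
  have hPM : (1 - K * (Z⁻¹ * Kᴴ)) * (1 + K * (A⁻¹ * Kᴴ)) = 1 := by
    simp only [Matrix.mul_add, Matrix.add_mul, Matrix.mul_sub, Matrix.sub_mul,
      Matrix.mul_one, Matrix.one_mul, Matrix.mul_assoc, hKK, canc1 hYZ]
    abel
  have hQ : (K * (A⁻¹ * Kᴴ)).PosSemidef := by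
    have := (hA.inv.posSemidef).mul_mul_conjTranspose_same K
    rwa [Matrix.mul_assoc] at this
  have hM : (1 + K * (A⁻¹ * Kᴴ)).PosDef := Matrix.PosDef.add_posSemidef Matrix.PosDef.one hQ
  have : (1 + K * (A⁻¹ * Kᴴ))⁻¹ = 1 - K * (Z⁻¹ * Kᴴ) := Matrix.inv_eq_left_inv hPM
  rw [← this]
  exact hM.inv

lemma conj_posdef_eq_zero_iff {m n : ℕ} {P : Matrix (Fin n) (Fin n) ℂ} (hP : P.PosDef)
    (E : Matrix (Fin n) (Fin m) ℂ) : Eᴴ * P * E = 0 ↔ E = 0 := by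
  constructor
  · intro h
    have hv : ∀ x : Fin m → ℂ, E *ᵥ x = 0 := by
      intro x
      by_contra hx
      have h1 : star x ⬝ᵥ ((Eᴴ * P * E) *ᵥ x) = 0 := by rw [h]; simp
      rw [← Matrix.mulVec_mulVec, ← Matrix.mulVec_mulVec, Matrix.dotProduct_mulVec,
        ← Matrix.star_mulVec] at h1
      have h2 := hP.dotProduct_mulVec_pos hx
      rw [h1] at h2
      exact lt_irrefl 0 h2
    ext i j
    have := congrFun (hv (Pi.single j 1)) i
    simpa [Matrix.mulVec_single] using this
  · intro h; simp [h]

/-- Theorem 2: the Schur complement of `R̂22` in `R̂`, where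
`R̂ij = Rij + (1/N_R) Hidᴴ Hjd`, equals the Schur complement of `R22` in `R`
if and only if `H1d = H2d R22⁻¹ R21`. -/
theorem schur_complement_preserved_iff {NR v w : ℕ} (hNR : 0 < NR)
    (R11 : Matrix (Fin v) (Fin v) ℂ) (R12 : Matrix (Fin v) (Fin w) ℂ)
    (R21 : Matrix (Fin w) (Fin v) ℂ) (R22 : Matrix (Fin w) (Fin w) ℂ)
    (hPD : (Matrix.fromBlocks R11 R12 R21 R22).PosDef)
    (H1d : Matrix (Fin NR) (Fin v) ℂ) (H2d : Matrix (Fin NR) (Fin w) ℂ) :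
    ((R11 + ((NR : ℂ))⁻¹ • (H1dᴴ * H1d)) -
        (R12 + ((NR : ℂ))⁻¹ • (H1dᴴ * H2d)) *
          (R22 + ((NR : ℂ))⁻¹ • (H2dᴴ * H2d))⁻¹ *
            (R12 + ((NR : ℂ))⁻¹ • (H1dᴴ * H2d))ᴴ =
      R11 - R12 * R22⁻¹ * R21) ↔ H1d = H2d * R22⁻¹ * R21 := by
  obtain ⟨h11, h21, h12, h22⟩ := Matrix.isHermitian_fromBlocks_iff.mp hPD.1
  have hR22 : R22.PosDef := by
    refine Matrix.PosDef.of_dotProduct_mulVec_pos h22 fun x hx => ?_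
    have hne : (Sum.elim (0 : Fin v → ℂ) x) ≠ 0 :=
      fun hc => hx (funext fun i => congrFun hc (Sum.inr i))
    have hs : star (Sum.elim (0 : Fin v → ℂ) x) = Sum.elim (0 : Fin v → ℂ) (star x) := by
      funext i; cases i <;> simp
    have h := hPD.dotProduct_mulVec_pos hne
    simpa [Matrix.fromBlocks_mulVec, hs, sumElim_dotProduct_sumElim] using h
  have hNR0 : (0:ℝ) < (NR:ℝ) := by exact_mod_cast hNR
  have hs0 : Real.sqrt NR ≠ 0 := ne_of_gt (Real.sqrt_pos.mpr hNR0)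
  set d : ℂ := ((Real.sqrt NR : ℝ) : ℂ)⁻¹ with hd
  have hdne : d ≠ 0 := by
    simp only [hd, ne_eq, inv_eq_zero, Complex.ofReal_eq_zero]
    exact hs0
  have hdstar : star d = d := by
    rw [hd, ← Complex.ofReal_inv]
    exact Complex.conj_ofReal _
  have hdd : d * d = ((NR : ℂ))⁻¹ := by
    rw [hd, ← mul_inv, ← Complex.ofReal_mul, Real.mul_self_sqrt hNR0.le]
    norm_num
  have hsm : ∀ {a b : ℕ} (P : Matrix (Fin NR) (Fin a) ℂ) (Q : Matrix (Fin NR) (Fin b) ℂ),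
      ((NR:ℂ))⁻¹ • (Pᴴ * Q) = (d • P)ᴴ * (d • Q) := by
    intro a b P Q
    rw [conjTranspose_smul, Matrix.smul_mul, Matrix.mul_smul, smul_smul, hdstar, hdd]
  rw [hsm H1d H1d, hsm H1d H2d, hsm H2d H2d]
  rw [schur_key R12 R21 R22 (d • H1d) (d • H2d) h12 hR22]
  rw [show ∀ (X Y T W : Matrix (Fin v) (Fin v) ℂ), (X + Y) - (W + Y - T) = (X - W) + T from
    fun X Y T W => by abel]
  rw [add_eq_left]
  rw [conj_posdef_eq_zero_iff (schur_P_posdef R22 (d • H2d) hR22)]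
  rw [sub_eq_zero, Matrix.smul_mul]
  constructor
  · intro h
    have h' := smul_right_injective (Matrix (Fin NR) (Fin v) ℂ) hdne h
    rw [h', ← Matrix.mul_assoc]
  · intro h
    rw [h, Matrix.mul_assoc]
end

section
/- Let R be Hermitian positive definite partitioned with R22 invertible, H1d and H2d complex matrices, and define M = H1d − H2d R22^{-1} R21 and R̂ with blocks R̂ij = Rij + (1/N_R)(H_d^H H_d)ij as above. If M = 0 then for each i in 1..v, the (i,i) entry of the inverse of the Schur complement of R̂22 in R̂ equals the (i,i) entry of R^{-1} restricted to the top-left v × v block, i.e., [R̂-Schur-complement applied]: [(Schur(R̂))^{-1}]_{ii} = [R^{-1}]_{ii}. -/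
open Matrix ComplexOrder

/-- If `M = H1d − H2d R22⁻¹ R21 = 0`, then for each `i ≤ v` the diagonal
entry of the inverse of the Schur complement of `R̂22` in `R̂` (where
`R̂ij = Rij + (1/N_R) Hidᴴ Hjd`) equals the corresponding diagonal entry of
the top-left block of `R⁻¹`. -/
theorem schur_inv_diag_eq_inv_diag_of_M_zero {NR v w : ℕ} (hNR : 0 < NR)
    (R11 : Matrix (Fin v) (Fin v) ℂ) (R12 : Matrix (Fin v) (Fin w) ℂ)
    (R21 : Matrix (Fin w) (Fin v) ℂ) (R22 : Matrix (Fin w) (Fin w) ℂ)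
    (hPD : (Matrix.fromBlocks R11 R12 R21 R22).PosDef)
    (H1d : Matrix (Fin NR) (Fin v) ℂ) (H2d : Matrix (Fin NR) (Fin w) ℂ)
    (hM : H1d - H2d * R22⁻¹ * R21 = 0) :
    ∀ i : Fin v,
      (((R11 + ((NR : ℂ))⁻¹ • (H1dᴴ * H1d)) -
          (R12 + ((NR : ℂ))⁻¹ • (H1dᴴ * H2d)) *
            (R22 + ((NR : ℂ))⁻¹ • (H2dᴴ * H2d))⁻¹ *
              (R12 + ((NR : ℂ))⁻¹ • (H1dᴴ * H2d))ᴴ)⁻¹) i i =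
        (Matrix.fromBlocks R11 R12 R21 R22)⁻¹ (Sum.inl i) (Sum.inl i) := by
  intro i
  classical
  obtain ⟨h11, hBC, hCB, h22⟩ := Matrix.isHermitian_fromBlocks_iff.mp hPD.isHermitian
  -- `R22` is positive definite
  have hR22 : R22.PosDef := by
    refine Matrix.PosDef.of_dotProduct_mulVec_pos h22 fun x hx => ?_
    have hx' : (Sum.elim (0 : Fin v → ℂ) x) ≠ 0 := by
      intro h; apply hx; funext j; exact congrFun h (Sum.inr j)
    have := hPD.dotProduct_mulVec_pos hx'
    simpa [Matrix.fromBlocks_mulVec, Function.star_sumElim, sumElim_dotProduct_sumElim] using this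
  haveI : Invertible R22 := hR22.isUnit.invertible
  -- the update term is positive semidefinite
  set c : ℂ := ((NR : ℂ))⁻¹ with hc
  have hS : (c • (H2dᴴ * H2d)).PosSemidef := by
    have ha : ((Real.sqrt NR : ℂ)⁻¹ • H2d)ᴴ * ((Real.sqrt NR : ℂ)⁻¹ • H2d)
        = c • (H2dᴴ * H2d) := by
      rw [conjTranspose_smul, Matrix.smul_mul, Matrix.mul_smul, smul_smul]
      congr 1
      rw [star_inv₀, show star ((Real.sqrt NR : ℝ) : ℂ) = ((Real.sqrt NR : ℝ) : ℂ) from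
        Complex.conj_ofReal _, ← mul_inv, ← Complex.ofReal_mul,
        Real.mul_self_sqrt (Nat.cast_nonneg NR)]
      norm_num
      exact hc.symm
    rw [← ha]
    exact Matrix.posSemidef_conjTranspose_mul_self _
  set S : Matrix (Fin w) (Fin w) ℂ := c • (H2dᴴ * H2d) with hSdef
  have hR22' : (R22 + S).PosDef := hR22.add_posSemidef hS
  haveI : Invertible (R22 + S) := hR22'.isUnit.invertible
  set K : Matrix (Fin w) (Fin v) ℂ := R22⁻¹ * R21 with hK
  have hH1 : H1d = H2d * K := by
    have h := sub_eq_zero.mp hM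
    rw [h, Matrix.mul_assoc]
  have hKH : Kᴴ = R12 * R22⁻¹ := by
    rw [hK, conjTranspose_mul, hCB, h22.inv.eq]
  have hR12 : R12 = Kᴴ * R22 := by
    rw [hKH, Matrix.inv_mul_cancel_right_of_invertible]
  -- the updated off-diagonal block
  have hB' : R12 + c • (H1dᴴ * H2d) = Kᴴ * (R22 + S) := by
    rw [hH1, conjTranspose_mul, Matrix.mul_add, ← hR12, hSdef]
    congr 1
    rw [Matrix.mul_smul, ← Matrix.mul_assoc]
  -- the Schur complement of the updated matrix equals that of the original
  have hSchur : (R11 + c • (H1dᴴ * H1d)) -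
      (R12 + c • (H1dᴴ * H2d)) * (R22 + S)⁻¹ * (R12 + c • (H1dᴴ * H2d))ᴴ
      = R11 - R12 * R22⁻¹ * R21 := by
    have hBH : (R12 + c • (H1dᴴ * H2d))ᴴ = (R22 + S) * K := by
      rw [hB', conjTranspose_mul, conjTranspose_conjTranspose, hR22'.isHermitian.eq]
    rw [hBH, hB']
    have : Kᴴ * (R22 + S) * (R22 + S)⁻¹ * ((R22 + S) * K) = Kᴴ * (R22 + S) * K := by
      rw [Matrix.mul_assoc (Kᴴ * (R22 + S)), Matrix.inv_mul_cancel_left_of_invertible,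
        Matrix.mul_assoc]
    rw [this, Matrix.mul_add, Matrix.add_mul]
    have h1 : Kᴴ * R22 * K = R12 * R22⁻¹ * R21 := by
      rw [← hR12, hK, ← Matrix.mul_assoc]
    have h2 : Kᴴ * S * K = c • (H1dᴴ * H1d) := by
      rw [hH1, hSdef, Matrix.mul_smul, Matrix.smul_mul]
      congr 1
      simp only [conjTranspose_mul, Matrix.mul_assoc]
    rw [h1, h2]
    abel
  -- relate the original inverse to the Schur complement inverse
  haveI : Invertible (Matrix.fromBlocks R11 R12 R21 R22) := hPD.isUnit.invertible
  haveI iS : Invertible (R11 - R12 * ⅟R22 * R21) :=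
    Matrix.invertibleOfFromBlocks₂₂Invertible R11 R12 R21 R22
  have hinv22 : (⅟R22 : Matrix (Fin w) (Fin w) ℂ) = R22⁻¹ := Matrix.invOf_eq_nonsing_inv R22
  haveI iS' : Invertible (R11 - R12 * R22⁻¹ * R21) := by rw [← hinv22]; exact iS
  have hRinv : (Matrix.fromBlocks R11 R12 R21 R22)⁻¹ (Sum.inl i) (Sum.inl i)
      = (R11 - R12 * R22⁻¹ * R21)⁻¹ i i := by
    rw [← Matrix.invOf_eq_nonsing_inv, Matrix.invOf_fromBlocks₂₂_eq]
    show (⅟(R11 - R12 * ⅟R22 * R21)) i i = _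
    rw [Matrix.invOf_eq_nonsing_inv, hinv22]
  rw [hRinv, ← hSchur]
end

section
/- Let σ1 > σ2 > ... > σn be real numbers. The function (σ, λ) ↦ det(e^{σ_i λ_j}) / (∏_{i<j}(σ_i − σ_j) ∏_{i<j}(λ_i − λ_j)) is symmetric under simultaneous reordering and, for fixed distinct σ, extends continuously in λ to points where some λ_j coincide, the extension at a point with all λ_j equal to λ0 being det-derivative form: det( ∂^{b_j}/∂λ^{b_j} e^{σ_i λ} |_{λ=λ0} ) / (∏_{i<j}(σ_i − σ_j) · ∏_{j} b_j!) with b_j = n − j. -/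
open Matrix

/-- Vandermonde-type product `∏_{i<j} (σ_i − σ_j)`. -/
noncomputable def vdm {n : ℕ} (σ : Fin n → ℝ) : ℝ :=
  ∏ i : Fin n, ∏ j ∈ Finset.univ.filter (fun j => i < j), (σ i - σ j)

/-- The function `g(σ, λ) = det(e^{σ_i λ_j}) / (∏_{i<j}(σ_i−σ_j) ∏_{i<j}(λ_i−λ_j))`. -/
noncomputable def gFun {n : ℕ} (σ lam : Fin n → ℝ) : ℝ :=
  (Matrix.det (Matrix.of fun i j => Real.exp (σ i * lam j))) / (vdm σ * vdm lam)

open Finset Polynomial intervalIntegral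


/-- Iterated-integral form of the divided difference of `y ↦ exp (s*y)` at nodes `x`. -/
noncomputable def EE : (k : ℕ) → ℝ → (Fin (k+1) → ℝ) → ℝ
  | 0, s, x => Real.exp (s * x 0)
  | (k+1), s, x =>
      s * ∫ u in (0:ℝ)..1, Real.exp (s * ((1-u) * x 0)) * EE k (u*s) (fun i => x i.succ)

lemma EE_zero (s : ℝ) (x : Fin 1 → ℝ) : EE 0 s x = Real.exp (s * x 0) := rfl

lemma EE_succ (k : ℕ) (s : ℝ) (x : Fin (k+2) → ℝ) :
    EE (k+1) s x
      = s * ∫ u in (0:ℝ)..1, Real.exp (s * ((1-u) * x 0)) * EE k (u*s) (fun i => x i.succ) := rfl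

lemma EE_cont (k : ℕ) : Continuous fun p : ℝ × (Fin (k+1) → ℝ) => EE k p.1 p.2 := by
  induction k with
  | zero =>
      simp only [EE]
      exact Real.continuous_exp.comp (continuous_fst.mul ((continuous_apply 0).comp continuous_snd))
  | succ k ih =>
      simp only [EE]
      have h1 : Continuous (Function.uncurry fun (p : ℝ × (Fin (k+2) → ℝ)) (u : ℝ) =>
          Real.exp (p.1 * ((1-u) * p.2 0)) * EE k (u*p.1) (fun i => p.2 i.succ)) := by
        show Continuous fun q : (ℝ × (Fin (k+2) → ℝ)) × ℝ =>
          Real.exp (q.1.1 * ((1-q.2) * q.1.2 0)) * EE k (q.2*q.1.1) (fun i => q.1.2 i.succ)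
        apply Continuous.mul
        · exact Real.continuous_exp.comp
            (continuous_fst.fst.mul ((continuous_const.sub continuous_snd).mul
              ((continuous_apply 0).comp continuous_fst.snd)))
        · exact ih.comp ((continuous_snd.mul continuous_fst.fst).prodMk
            (continuous_pi fun i => (continuous_apply i.succ).comp continuous_fst.snd))
      exact continuous_fst.mul
        (intervalIntegral.continuous_parametric_intervalIntegral_of_continuous' h1 0 1)

lemma sum_inv_weights {m : ℕ} (x : Fin (m+2) → ℝ) (hx : Function.Injective x) :
    ∑ r : Fin (m+2), (∏ l ∈ Finset.univ.erase r, (x r - x l))⁻¹ = 0 := by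
  have hb := Lagrange.sum_basis (s := Finset.univ) (v := x) hx.injOn ⟨0, mem_univ 0⟩
  have h2 := congrArg (fun p : ℝ[X] => p.coeff (m+1)) hb
  rw [Polynomial.finset_sum_coeff] at h2
  have hco : ∀ r : Fin (m+2),
      (Lagrange.basis Finset.univ x r).coeff (m+1)
        = (∏ l ∈ Finset.univ.erase r, (x r - x l))⁻¹ := by
    intro r
    rw [Lagrange.basis]
    simp only [Lagrange.basisDivisor]
    rw [Finset.prod_mul_distrib, ← map_prod (Polynomial.C : ℝ →+* ℝ[X]) _ _, Polynomial.coeff_C_mul]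
    have hmonic : (∏ l ∈ Finset.univ.erase r, (X - C (x l))).Monic :=
      monic_prod_of_monic _ _ (fun l _ => monic_X_sub_C _)
    have hdeg : (∏ l ∈ Finset.univ.erase r, (X - C (x l))).natDegree = m+1 := by
      rw [natDegree_prod_of_monic _ _ (fun l _ => monic_X_sub_C _)]
      simp [Finset.card_erase_of_mem]
    have := hmonic.coeff_natDegree
    rw [hdeg] at this
    rw [this, mul_one, ← Finset.prod_inv_distrib]
  rw [Polynomial.coeff_one] at h2
  simp only [hco] at h2
  simpa using h2

lemma int_exp (s x0 d : ℝ) (hd : d ≠ 0) :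
    (s * ∫ u in (0:ℝ)..1, Real.exp (s*(x0 + u*d)))
      = (Real.exp (s*(x0+d)) - Real.exp (s*x0))/d := by
  have hΦ : ∀ u ∈ Set.uIcc (0:ℝ) 1,
      HasDerivAt (fun u => Real.exp (s*(x0+u*d))) (s*d*Real.exp (s*(x0+u*d))) u := by
    intro u _
    have h1 : HasDerivAt (fun u : ℝ => s*(x0+u*d)) (s*d) u := by
      simpa using (((hasDerivAt_id u).mul_const d).const_add x0).const_mul s
    convert h1.exp using 1; ring
  have hint := intervalIntegral.integral_eq_sub_of_hasDerivAt hΦ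
    ((by fun_prop : Continuous fun u : ℝ => s*d*Real.exp (s*(x0+u*d))).intervalIntegrable 0 1)
  rw [intervalIntegral.integral_const_mul] at hint
  simp only [one_mul, zero_mul, add_zero] at hint
  rw [eq_div_iff hd]
  linear_combination hint

lemma prod_erase_succ {k : ℕ} (g : Fin (k+2) → ℝ) (r : Fin (k+1)) :
    ∏ l ∈ Finset.univ.erase r.succ, g l = g 0 * ∏ l ∈ Finset.univ.erase r, g l.succ := by
  rw [Fin.univ_succ, Finset.cons_eq_insert,
    Finset.erase_insert_of_ne (Fin.succ_ne_zero r).symm,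
    show r.succ = (⟨Fin.succ, Fin.succ_injective _⟩ : Fin (k+1) ↪ Fin (k+2)) r from rfl,
    ← Finset.map_erase, Finset.prod_insert (by simp), Finset.prod_map]
  rfl

lemma EE_const (k : ℕ) (s c : ℝ) : EE k s (fun _ => c) = s^k * Real.exp (s*c) / k.factorial := by
  induction k generalizing s with
  | zero => simp [EE]
  | succ k ih =>
    rw [EE_succ]
    have hcong : (fun u : ℝ => Real.exp (s*((1-u)*c)) * EE k (u*s) (fun _ => c))
        = fun u : ℝ => u^k * (s^k * Real.exp (s*c) / k.factorial) := by
      funext u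
      have h1 : Real.exp (s*((1-u)*c)) * Real.exp (u*s*c) = Real.exp (s*c) := by
        rw [← Real.exp_add]; congr 1; ring
      rw [ih (u*s), mul_pow]
      have hf : (k.factorial : ℝ) ≠ 0 := Nat.cast_ne_zero.mpr k.factorial_ne_zero
      field_simp
      linear_combination (norm := ring_nf) (u^k*s^k) * h1
    rw [hcong, intervalIntegral.integral_mul_const, integral_pow]
    have hk : ((k:ℝ)+1) ≠ 0 := by positivity
    have hf : (k.factorial : ℝ) ≠ 0 := Nat.cast_ne_zero.mpr k.factorial_ne_zero
    rw [Nat.factorial_succ]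
    push_cast
    field_simp
    ring

lemma EE_eq_sum (k : ℕ) (s : ℝ) (x : Fin (k+1) → ℝ) (hx : Function.Injective x) :
    EE k s x = ∑ r, Real.exp (s * x r) * (∏ l ∈ Finset.univ.erase r, (x r - x l))⁻¹ := by
  induction k generalizing s with
  | zero =>
      have : (Finset.univ.erase (0 : Fin 1)) = ∅ := by decide
      simp [EE, this]
  | succ k ih =>
    have hxt : Function.Injective (fun i : Fin (k+1) => x i.succ) :=
      hx.comp (Fin.succ_injective _)
    set xt : Fin (k+1) → ℝ := fun i => x i.succ with hxtdef
    set w : Fin (k+1) → ℝ := fun r => ∏ l ∈ Finset.univ.erase r, (xt r - xt l) with hwdef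
    set W : Fin (k+2) → ℝ := fun r => ∏ l ∈ Finset.univ.erase r, (x r - x l) with hWdef
    have hd : ∀ r : Fin (k+1), xt r - x 0 ≠ 0 := by
      intro r
      exact sub_ne_zero.mpr (fun h => (Fin.succ_ne_zero r) (hx h))
    have hWsucc : ∀ r : Fin (k+1), W r.succ = (xt r - x 0) * w r := by
      intro r
      have := prod_erase_succ (fun l => x r.succ - x l) r
      simpa [hWdef, hwdef, hxtdef] using this
    have hsum0 : (W 0)⁻¹ + ∑ r : Fin (k+1), (W r.succ)⁻¹ = 0 := by
      have := sum_inv_weights x hx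
      rwa [Fin.sum_univ_succ] at this
    rw [EE_succ]
    have hcong : (fun u : ℝ => Real.exp (s*((1-u)*x 0)) * EE k (u*s) (fun i => x i.succ))
        = fun u : ℝ => ∑ r : Fin (k+1),
            Real.exp (s*(x 0 + u*(xt r - x 0))) * (w r)⁻¹ := by
      funext u
      rw [show (fun i : Fin (k+1) => x i.succ) = xt from rfl, ih (u*s) xt hxt, Finset.mul_sum]
      refine Finset.sum_congr rfl (fun r _ => ?_)
      rw [← mul_assoc, ← Real.exp_add, show s*((1-u)*x 0) + u*s*xt r
          = s*(x 0 + u*(xt r - x 0)) by ring]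
    rw [hcong, intervalIntegral.integral_finset_sum (fun r _ =>
      (by fun_prop : Continuous fun u : ℝ =>
        Real.exp (s*(x 0 + u*(xt r - x 0))) * (w r)⁻¹).intervalIntegrable 0 1),
      Finset.mul_sum]
    have hterm : ∀ r : Fin (k+1),
        s * ∫ u in (0:ℝ)..1, Real.exp (s*(x 0 + u*(xt r - x 0))) * (w r)⁻¹
          = Real.exp (s * xt r) * (W r.succ)⁻¹ - Real.exp (s * x 0) * (W r.succ)⁻¹ := by
      intro r
      rw [intervalIntegral.integral_mul_const,
        show s * ((∫ u in (0:ℝ)..1, Real.exp (s*(x 0 + u*(xt r - x 0)))) * (w r)⁻¹)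
          = (s * ∫ u in (0:ℝ)..1, Real.exp (s*(x 0 + u*(xt r - x 0)))) * (w r)⁻¹ from by ring,
        int_exp s (x 0) (xt r - x 0) (hd r),
        show s*(x 0 + (xt r - x 0)) = s * xt r by ring, hWsucc r, mul_inv]
      have hwne : (w r) ≠ 0 := by
        rw [hwdef]
        exact Finset.prod_ne_zero_iff.mpr (fun l hl =>
          sub_ne_zero.mpr (fun h => (Finset.ne_of_mem_erase hl) (hxt h).symm))
      field_simp
    rw [Finset.sum_congr rfl (fun r _ => hterm r), Finset.sum_sub_distrib,
      Fin.sum_univ_succ (f := fun r => Real.exp (s * x r) * (W r)⁻¹)]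
    have hw0 : ∑ r : Fin (k+1), (W r.succ)⁻¹ = -(W 0)⁻¹ := by linarith [hsum0]
    rw [← Finset.mul_sum, hw0]
    ring

lemma newton_tel {x : ℕ → ℝ} {N : ℕ} (hx : ∀ i j, i < N → j < N → i ≠ j → x i ≠ x j)
    (r j : ℕ) (hrj : r < j) (hj : j < N) :
    ∀ M, r ≤ M → M ≤ j →
      ∑ m ∈ Icc r M, (∏ l ∈ (range (m+1)).erase r, (x r - x l))⁻¹ * ∏ l ∈ range m, (x j - x l)
        = (∏ l ∈ (range (M+1)).erase r, (x j - x l))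
          * (∏ l ∈ (range (M+1)).erase r, (x r - x l))⁻¹ := by
  intro M
  induction M with
  | zero =>
      intro h0 _
      interval_cases r
      rw [show Icc 0 0 = {0} from rfl, Finset.sum_singleton]
      rw [show (range 1).erase 0 = ∅ from rfl]
      simp
  | succ M ihM =>
      intro hrM hMj
      rcases Nat.lt_or_ge M r with hMr | hMr'
      · -- r = M+1 : base case
        have hrM1 : r = M + 1 := le_antisymm hrM hMr
        subst hrM1
        rw [Finset.Icc_self, Finset.sum_singleton]
        have he : (range (M+1+1)).erase (M+1) = range (M+1) := by
          rw [Finset.range_add_one, Finset.erase_insert (by simp)]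
        rw [he]
        ring
      · -- inductive step
        have hMj' : M ≤ j := by omega
        have hIH := ihM hMr' hMj'
        rw [Finset.sum_Icc_succ_top (by omega : r ≤ M + 1), hIH]
        have hne : r ≠ M+1 := by omega
        have hins : (range (M+2)).erase r = insert (M+1) ((range (M+1)).erase r) := by
          rw [Finset.range_add_one, Finset.erase_insert_of_ne (by omega : M+1 ≠ r)]
        have hnotmem : (M+1) ∉ (range (M+1)).erase r := by simp
        have hmem : r ∈ range (M+1) := by simp; omega
        have hA : ∏ l ∈ range (M+1), (x j - x l)
            = (x j - x r) * ∏ l ∈ (range (M+1)).erase r, (x j - x l) :=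
          (Finset.mul_prod_erase _ _ hmem).symm
        rw [hins, Finset.prod_insert hnotmem, Finset.prod_insert hnotmem, hA]
        have hBne : (∏ l ∈ (range (M+1)).erase r, (x r - x l)) ≠ 0 := by
          refine Finset.prod_ne_zero_iff.mpr (fun l hl => sub_ne_zero.mpr ?_)
          have hl1 := Finset.mem_of_mem_erase hl
          have hl2 := Finset.ne_of_mem_erase hl
          exact hx r l (by omega) (by simp at hl1; omega) (Ne.symm hl2)
        have hdne : x r - x (M+1) ≠ 0 :=
          sub_ne_zero.mpr (hx r (M+1) (by omega) (by omega) hne)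
        field_simp
        ring

lemma newton (N : ℕ) (x y : ℕ → ℝ)
    (hx : ∀ i j, i < N → j < N → i ≠ j → x i ≠ x j) (j : ℕ) (hj : j < N) :
    ∑ m ∈ Finset.range N,
      ((∑ r ∈ Finset.range (m+1), y r * (∏ l ∈ (Finset.range (m+1)).erase r, (x r - x l))⁻¹)
        * ∏ l ∈ Finset.range m, (x j - x l)) = y j := by
  have hswap : ∑ m ∈ range N,
      ((∑ r ∈ range (m+1), y r * (∏ l ∈ (range (m+1)).erase r, (x r - x l))⁻¹)
        * ∏ l ∈ range m, (x j - x l))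
      = ∑ r ∈ range N, y r * ∑ m ∈ Ico r N,
          (∏ l ∈ (range (m+1)).erase r, (x r - x l))⁻¹ * ∏ l ∈ range m, (x j - x l) := by
    simp_rw [Finset.sum_mul, Finset.mul_sum]
    rw [Finset.sum_comm' (s := range N) (t := fun m => range (m+1)) (t' := range N)
      (s' := fun r => Ico r N) (by intro m r; simp; omega)]
    refine Finset.sum_congr rfl (fun r _ => Finset.sum_congr rfl (fun m _ => by ring))
  rw [hswap]
  have hinner : ∀ r ∈ range N,
      (∑ m ∈ Ico r N, (∏ l ∈ (range (m+1)).erase r, (x r - x l))⁻¹ * ∏ l ∈ range m, (x j - x l))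
        = if r = j then 1 else 0 := by
    intro r hr
    rw [Finset.mem_range] at hr
    have hzero : ∀ m, j < m → (∏ l ∈ (range (m+1)).erase r, (x r - x l))⁻¹
        * ∏ l ∈ range m, (x j - x l) = 0 := by
      intro m hm
      have h0 : ∏ l ∈ range m, (x j - x l) = 0 :=
        Finset.prod_eq_zero (i := j) (Finset.mem_range.mpr hm) (sub_self (x j))
      rw [h0, mul_zero]
    rcases lt_trichotomy r j with hlt | heq | hgt
    · -- r < j : telescoping, S j = 0
      rw [if_neg (by omega)]
      have hsub : ∑ m ∈ Ico r N, (∏ l ∈ (range (m+1)).erase r, (x r - x l))⁻¹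
            * ∏ l ∈ range m, (x j - x l)
          = ∑ m ∈ Icc r j, (∏ l ∈ (range (m+1)).erase r, (x r - x l))⁻¹
            * ∏ l ∈ range m, (x j - x l) := by
        refine (Finset.sum_subset (by intro m hm; simp at hm ⊢; omega) ?_).symm
        intro m hm1 hm2
        simp only [Finset.mem_Ico, Finset.mem_Icc] at hm1 hm2
        exact hzero m (by omega)
      rw [hsub, newton_tel hx r j hlt hj j (le_of_lt hlt) le_rfl]
      have h0 : ∏ l ∈ (range (j+1)).erase r, (x j - x l) = 0 :=
        Finset.prod_eq_zero (i := j) (Finset.mem_erase.mpr ⟨by omega, by simp⟩) (sub_self (x j))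
      rw [h0, zero_mul]
    · -- r = j
      subst heq
      rw [if_pos rfl]
      rw [Finset.sum_eq_single r]
      · have he : (range (r+1)).erase r = range r := by
          rw [Finset.range_add_one, Finset.erase_insert (by simp)]
        rw [he, inv_mul_cancel₀]
        refine Finset.prod_ne_zero_iff.mpr (fun l hl => sub_ne_zero.mpr ?_)
        simp only [Finset.mem_range] at hl
        exact hx r l hr (by omega) (by omega)
      · intro m hm hne
        simp only [Finset.mem_Ico] at hm
        exact hzero m (by omega)
      · intro h; exact absurd (Finset.mem_Ico.mpr ⟨le_rfl, hr⟩) h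
    · -- j < r
      rw [if_neg (by omega)]
      refine Finset.sum_eq_zero (fun m hm => ?_)
      simp only [Finset.mem_Ico] at hm
      exact hzero m (by omega)
  rw [Finset.sum_congr rfl (fun r hr => by rw [hinner r hr])]
  simp only [mul_ite, mul_one, mul_zero]
  rw [Finset.sum_ite_eq' (range N) j y]
  rw [if_pos (Finset.mem_range.mpr hj)]

variable {n : ℕ}

lemma fin_prod_filter {N : ℕ} (p : ℕ → Prop) [DecidablePred p] (F : ℕ → ℝ) :
    ∏ l ∈ (Finset.univ : Finset (Fin N)).filter (fun l => p l.val), F l.val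
      = ∏ l ∈ (Finset.range N).filter p, F l := by
  rw [Finset.prod_filter, Finset.prod_filter,
    ← Fin.prod_univ_eq_prod_range (fun t => if p t then F t else 1) N]

lemma Ioi_eq_filter (i : Fin n) : Finset.Ioi i = Finset.univ.filter (fun j => i < j) := by
  ext j; simp

lemma vdm_eq (v : Fin n → ℝ) :
    vdm v = (∏ i : Fin n, (-1:ℝ)^((Finset.univ.filter (fun j => i < j)).card))
      * (Matrix.vandermonde v).det := by
  rw [Matrix.det_vandermonde, vdm]
  rw [← Finset.prod_mul_distrib]
  refine Finset.prod_congr rfl (fun i _ => ?_)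
  rw [Ioi_eq_filter]
  rw [show (∏ j ∈ Finset.univ.filter (fun j => i < j), (v i - v j))
      = ∏ j ∈ Finset.univ.filter (fun j => i < j), (-1) * (v j - v i) from
    Finset.prod_congr rfl (fun j _ => by ring)]
  rw [Finset.prod_mul_distrib, Finset.prod_const]

lemma vdm_mul (v w : Fin n → ℝ) :
    vdm v * vdm w = (Matrix.vandermonde v).det * (Matrix.vandermonde w).det := by
  rw [vdm_eq v, vdm_eq w]
  set eps := ∏ i : Fin n, (-1:ℝ)^((Finset.univ.filter (fun j => i < j)).card) with hepsdef
  have heps : eps * eps = 1 := by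
    rw [hepsdef, ← Finset.prod_mul_distrib]
    refine Finset.prod_eq_one (fun i _ => ?_)
    rw [← mul_pow]
    norm_num
  linear_combination ((Matrix.vandermonde v).det * (Matrix.vandermonde w).det) * heps

lemma det_rev_vandermonde (w : Fin n → ℝ) :
    Matrix.det (Matrix.of fun i j : Fin n => w i ^ (n-1-(j:ℕ))) = vdm w := by
  have h1 : (Matrix.of fun i j : Fin n => w i ^ (n-1-(j:ℕ)))
      = (Matrix.vandermonde (fun i => w i.rev)).submatrix Fin.revPerm Fin.revPerm := by
    ext i j
    simp only [Matrix.of_apply, Matrix.submatrix_apply, Matrix.vandermonde_apply,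
      Fin.revPerm_apply, Fin.rev_rev]
    congr 1
    rw [Fin.val_rev]
    omega
  rw [h1, Matrix.det_submatrix_equiv_self, Matrix.det_vandermonde, vdm]
  have e1 : (∏ i : Fin n, ∏ j ∈ Finset.Ioi i, (w j.rev - w i.rev))
      = ∏ p ∈ Finset.univ.sigma (fun i : Fin n => Finset.Ioi i), (w p.2.rev - w p.1.rev) :=
    Finset.prod_sigma' _ _ _
  have e2 : (∏ i : Fin n, ∏ j ∈ Finset.univ.filter (fun j => i < j), (w i - w j))
      = ∏ p ∈ Finset.univ.sigma (fun i : Fin n => Finset.univ.filter (fun j => i < j)),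
          (w p.1 - w p.2) :=
    Finset.prod_sigma' _ _ _
  rw [e1, e2]
  refine Finset.prod_nbij' (fun p => ⟨p.2.rev, p.1.rev⟩) (fun p => ⟨p.2.rev, p.1.rev⟩)
    ?_ ?_ ?_ ?_ ?_
  · rintro ⟨a, b⟩ hab
    simp only [Finset.mem_sigma, Finset.mem_Ioi, Finset.mem_filter, Finset.mem_univ] at hab ⊢
    refine ⟨trivial, trivial, ?_⟩
    rw [Fin.rev_lt_rev]
    exact hab.2
  · rintro ⟨a, b⟩ hab
    simp only [Finset.mem_sigma, Finset.mem_Ioi, Finset.mem_filter, Finset.mem_univ] at hab ⊢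
    refine ⟨trivial, ?_⟩
    rw [Fin.rev_lt_rev]
    exact hab.2.2
  · rintro ⟨a, b⟩ _; simp [Fin.rev_rev]
  · rintro ⟨a, b⟩ _; simp [Fin.rev_rev]
  · rintro ⟨a, b⟩ _; simp [Fin.rev_rev]

section BU
variable {n : ℕ}

noncomputable def Bmat (σ lam : Fin n → ℝ) : Matrix (Fin n) (Fin n) ℝ :=
  Matrix.of fun i j => EE j.val (σ i) (fun l => lam (Fin.castLE j.isLt l))

noncomputable def Umat (lam : Fin n → ℝ) : Matrix (Fin n) (Fin n) ℝ :=
  Matrix.of fun m j => ∏ l ∈ Finset.univ.filter (fun l => l < m), (lam j - lam l)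

noncomputable def xext (lam : Fin n → ℝ) : ℕ → ℝ :=
  fun t => if h : t < n then lam ⟨t, h⟩ else 0

lemma Umat_triangular (lam : Fin n → ℝ) : (Umat lam).BlockTriangular id := by
  intro m j hj
  simp only [id_eq] at hj
  show (∏ l ∈ Finset.univ.filter (fun l => l < m), (lam j - lam l)) = 0
  exact Finset.prod_eq_zero (i := j) (Finset.mem_filter.mpr ⟨Finset.mem_univ _, hj⟩)
    (sub_self (lam j))

lemma Umat_det (lam : Fin n → ℝ) : (Umat lam).det = (Matrix.vandermonde lam).det := by
  rw [Matrix.det_of_upperTriangular (Umat_triangular lam), Matrix.det_vandermonde]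
  have e1 : (∏ m : Fin n, Umat lam m m)
      = ∏ p ∈ Finset.univ.sigma (fun m : Fin n => Finset.univ.filter (fun l => l < m)),
          (lam p.1 - lam p.2) := by
    rw [show (fun m : Fin n => Umat lam m m)
        = fun m => ∏ l ∈ Finset.univ.filter (fun l => l < m), (lam m - lam l) from rfl]
    exact Finset.prod_sigma' _ _ _
  have e2 : (∏ i : Fin n, ∏ j ∈ Finset.Ioi i, (lam j - lam i))
      = ∏ p ∈ Finset.univ.sigma (fun i : Fin n => Finset.Ioi i), (lam p.2 - lam p.1) :=
    Finset.prod_sigma' _ _ _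
  rw [e1, e2]
  refine Finset.prod_nbij' (fun p => ⟨p.2, p.1⟩) (fun p => ⟨p.2, p.1⟩) ?_ ?_ ?_ ?_ ?_
  · rintro ⟨a, b⟩ hab
    simp only [Finset.mem_sigma, Finset.mem_filter, Finset.mem_univ, Finset.mem_Ioi] at hab ⊢
    exact ⟨trivial, hab.2.2⟩
  · rintro ⟨a, b⟩ hab
    simp only [Finset.mem_sigma, Finset.mem_filter, Finset.mem_univ, Finset.mem_Ioi] at hab ⊢
    exact ⟨trivial, trivial, hab.2⟩
  · rintro ⟨a, b⟩ _; rfl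
  · rintro ⟨a, b⟩ _; rfl
  · rintro ⟨a, b⟩ _; rfl

lemma exp_eq_BU (σ lam : Fin n → ℝ) (hlam : Function.Injective lam) :
    (Matrix.of fun i j => Real.exp (σ i * lam j)) = Bmat σ lam * Umat lam := by
  set x := xext lam with hxdef
  have hxv : ∀ (t : ℕ) (h : t < n), x t = lam ⟨t, h⟩ := by
    intro t h; rw [hxdef, xext, dif_pos h]
  have hxfin : ∀ m : Fin n, x m.val = lam m := by
    intro m; rw [hxv m.val m.isLt]
  have hx' : ∀ a b, a < n → b < n → a ≠ b → x a ≠ x b := by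
    intro a b ha hb hab
    rw [hxv a ha, hxv b hb]
    intro h
    exact hab (by simpa using congrArg Fin.val (hlam h))
  ext i j
  rw [Matrix.mul_apply, Matrix.of_apply]
  have hB : ∀ m : Fin n, Bmat σ lam i m
      = ∑ r ∈ Finset.range (m.val+1), Real.exp (σ i * x r)
          * (∏ l ∈ (Finset.range (m.val+1)).erase r, (x r - x l))⁻¹ := by
    intro m
    have hinj : Function.Injective (fun l : Fin (m.val+1) => lam (Fin.castLE m.isLt l)) :=
      hlam.comp (Fin.castLE_injective _)
    show EE m.val (σ i) (fun l => lam (Fin.castLE m.isLt l)) = _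
    rw [EE_eq_sum _ _ _ hinj]
    have hcast : ∀ l : Fin (m.val+1), lam (Fin.castLE m.isLt l) = x l.val := by
      intro l
      rw [hxv l.val (lt_of_lt_of_le l.isLt m.isLt)]
      congr 1
    have hterm : ∀ r : Fin (m.val+1),
        Real.exp (σ i * lam (Fin.castLE m.isLt r))
          * (∏ l ∈ Finset.univ.erase r, (lam (Fin.castLE m.isLt r) - lam (Fin.castLE m.isLt l)))⁻¹
        = Real.exp (σ i * x r.val)
          * (∏ l ∈ (Finset.range (m.val+1)).erase r.val, (x r.val - x l))⁻¹ := by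
      intro r
      rw [hcast r]
      congr 2
      have step1 : (∏ l ∈ Finset.univ.erase r, (x r.val - lam (Fin.castLE m.isLt l)))
          = ∏ l ∈ Finset.univ.erase r, (x r.val - x l.val) :=
        Finset.prod_congr rfl (fun l _ => by rw [hcast l])
      have hset : (Finset.univ : Finset (Fin (m.val+1))).erase r
          = Finset.univ.filter (fun l => l.val ≠ r.val) := by
        ext l
        simp [Fin.ext_iff]
      rw [step1, hset, fin_prod_filter (fun t => t ≠ r.val) (fun t => x r.val - x t),
        Finset.filter_ne' (Finset.range (m.val+1)) r.val]
    rw [Finset.sum_congr rfl (fun r _ => hterm r)]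
    exact Fin.sum_univ_eq_sum_range (fun r => Real.exp (σ i * x r)
      * (∏ l ∈ (Finset.range (m.val+1)).erase r, (x r - x l))⁻¹) (m.val+1)
  have hU : ∀ m : Fin n, Umat lam m j = ∏ l ∈ Finset.range m.val, (x j.val - x l) := by
    intro m
    have step1 : Umat lam m j
        = ∏ l ∈ Finset.univ.filter (fun l : Fin n => l.val < m.val), (x j.val - x l.val) := by
      show (∏ l ∈ Finset.univ.filter (fun l => l < m), (lam j - lam l)) = _
      refine Finset.prod_congr ?_ (fun l _ => by rw [hxfin l, hxfin j])
      ext l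
      simp only [Finset.mem_filter, Finset.mem_univ, true_and]
      exact Iff.rfl
    rw [step1, fin_prod_filter (fun t => t < m.val) (fun t => x j.val - x t)]
    congr 1
    ext t
    simp only [Finset.mem_filter, Finset.mem_range]
    constructor
    · rintro ⟨_, h2⟩; exact h2
    · intro h; exact ⟨lt_trans h m.isLt, h⟩
  rw [Finset.sum_congr rfl (fun m _ => by rw [hB m, hU m])]
  rw [Fin.sum_univ_eq_sum_range (fun m => (∑ r ∈ Finset.range (m+1), Real.exp (σ i * x r)
      * (∏ l ∈ (Finset.range (m+1)).erase r, (x r - x l))⁻¹)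
      * ∏ l ∈ Finset.range m, (x j.val - x l)) n]
  rw [newton n x (fun t => Real.exp (σ i * x t)) hx' j.val j.isLt, hxfin j]

end BU

section Final
open Filter

variable {n : ℕ}

lemma Bmat_det_cont (σ : Fin n → ℝ) : Continuous fun lam : Fin n → ℝ => (Bmat σ lam).det := by
  refine Continuous.matrix_det (continuous_matrix (fun i j => ?_))
  show Continuous fun lam : Fin n → ℝ => EE j.val (σ i) (fun l => lam (Fin.castLE j.isLt l))
  exact (EE_cont j.val).comp (continuous_const.prodMk
    (continuous_pi fun l => continuous_apply _))

lemma Bmat_const_det (σ : Fin n → ℝ) (c : ℝ) :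
    (Bmat σ (fun _ => c)).det
      = (∏ j : Fin n, ((j.val.factorial : ℝ))⁻¹) * ((∏ i : Fin n, Real.exp (σ i * c))
          * (Matrix.vandermonde σ).det) := by
  have h1 : Bmat σ (fun _ => c)
      = Matrix.of fun i (j : Fin n) => ((j.val.factorial : ℝ))⁻¹
          * (Real.exp (σ i * c) * σ i ^ (j:ℕ)) := by
    ext i j
    show EE j.val (σ i) (fun _ => c) = _
    rw [EE_const]
    simp only [Matrix.of_apply, Matrix.vandermonde_apply]
    rw [div_eq_mul_inv]
    ring
  rw [h1]
  erw [Matrix.det_mul_row (fun j : Fin n => ((j.val.factorial : ℝ))⁻¹)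
    (Matrix.of fun i j : Fin n => Real.exp (σ i * c) * σ i ^ (j:ℕ))]
  show (∏ j : Fin n, ((j.val.factorial : ℝ))⁻¹)
      * (Matrix.of fun i j : Fin n => Real.exp (σ i * c) * σ i ^ (j:ℕ)).det = _
  erw [Matrix.det_mul_column (fun i => Real.exp (σ i * c)) (Matrix.vandermonde σ)]

theorem gFun_symm_and_tendsto' (σ : Fin n → ℝ) (hσ : StrictAnti σ)
    (lam0 : ℝ) :
    (∀ (e : Equiv.Perm (Fin n)) (lam : Fin n → ℝ),
        gFun (σ ∘ e) (lam ∘ e) = gFun σ lam) ∧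
    Filter.Tendsto (fun lam : Fin n → ℝ => gFun σ lam)
      (nhdsWithin (fun _ => lam0) {lam | Function.Injective lam})
      (nhds ((Matrix.det (Matrix.of fun i j : Fin n =>
          σ i ^ (n - 1 - (j : ℕ)) * Real.exp (σ i * lam0))) /
        (vdm σ * ∏ j : Fin n, (Nat.factorial (n - 1 - (j : ℕ)) : ℝ)))) := by
  constructor
  · intro e lam
    unfold gFun
    have hdet : (Matrix.of fun i j => Real.exp ((σ ∘ e) i * (lam ∘ e) j))
        = (Matrix.of fun i j => Real.exp (σ i * lam j)).submatrix e e := by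
      ext i j; rfl
    rw [hdet, Matrix.det_submatrix_equiv_self]
    congr 1
    rw [vdm_mul, vdm_mul]
    have hv : ∀ v : Fin n → ℝ,
        (Matrix.vandermonde (v ∘ e)).det
          = (((Equiv.Perm.sign e : ℤ)) : ℝ) * (Matrix.vandermonde v).det := by
      intro v
      have h2 : Matrix.vandermonde (v ∘ e) = (Matrix.vandermonde v).submatrix e id := by
        ext i j; rfl
      rw [h2]
      exact Matrix.det_permute e (Matrix.vandermonde v)
    rw [hv σ, hv lam]
    rcases Int.units_eq_one_or (Equiv.Perm.sign e) with h | h <;> rw [h] <;>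
      push_cast <;> ring
  · have hWσ : (Matrix.vandermonde σ).det ≠ 0 :=
      Matrix.det_vandermonde_ne_zero_iff.mpr hσ.injective
    have hvdmσ : vdm σ ≠ 0 := by
      simp only [vdm]
      refine Finset.prod_ne_zero_iff.mpr (fun i _ => Finset.prod_ne_zero_iff.mpr (fun j hj => ?_))
      rw [Finset.mem_filter] at hj
      exact sub_ne_zero.mpr (ne_of_gt (hσ hj.2))
    set F := fun lam : Fin n → ℝ => (Bmat σ lam).det / (Matrix.vandermonde σ).det with hFdef
    have hkey : ∀ lam : Fin n → ℝ, Function.Injective lam → gFun σ lam = F lam := by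
      intro lam hlam
      have hWlam : (Matrix.vandermonde lam).det ≠ 0 :=
        Matrix.det_vandermonde_ne_zero_iff.mpr hlam
      unfold gFun
      have hF : F lam = (Bmat σ lam).det / (Matrix.vandermonde σ).det := rfl
      rw [exp_eq_BU σ lam hlam, Matrix.det_mul, Umat_det, vdm_mul, hF]
      field_simp
    have hval : (Matrix.det (Matrix.of fun i j : Fin n =>
          σ i ^ (n - 1 - (j : ℕ)) * Real.exp (σ i * lam0))) /
        (vdm σ * ∏ j : Fin n, (Nat.factorial (n - 1 - (j : ℕ)) : ℝ)) = F (fun _ => lam0) := by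
      have hdetT : (Matrix.of fun i j : Fin n => σ i ^ (n - 1 - (j : ℕ)) * Real.exp (σ i * lam0))
          = Matrix.of fun i j : Fin n => Real.exp (σ i * lam0)
              * ((Matrix.of fun i j : Fin n => σ i ^ (n - 1 - (j : ℕ))) i j) := by
        ext i j
        simp only [Matrix.of_apply]
        ring
      rw [hdetT, Matrix.det_mul_column, det_rev_vandermonde]
      have hPfac : (∏ j : Fin n, (Nat.factorial (n - 1 - (j : ℕ)) : ℝ))
          = ∏ j : Fin n, ((j : ℕ).factorial : ℝ) := by
        refine Fintype.prod_equiv Fin.revPerm _ _ (fun j => ?_)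
        simp only [Fin.revPerm_apply, Fin.val_rev]
        congr 2
        omega
      have hF0 : F (fun _ => lam0)
          = (Bmat σ (fun _ => lam0)).det / (Matrix.vandermonde σ).det := rfl
      rw [hPfac, hF0, Bmat_const_det σ lam0]
      have hfacne : (∏ j : Fin n, ((j : ℕ).factorial : ℝ)) ≠ 0 :=
        Finset.prod_ne_zero_iff.mpr
          (fun j _ => Nat.cast_ne_zero.mpr (Nat.factorial_ne_zero _))
      rw [Finset.prod_inv_distrib]
      field_simp
      ring
      simp_rw [mul_comm lam0]
    rw [hval]
    refine Filter.Tendsto.congr' ?_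
      (((Bmat_det_cont σ).div_const ((Matrix.vandermonde σ).det)).tendsto
        (fun _ => lam0) |>.mono_left nhdsWithin_le_nhds)
    exact Filter.eventuallyEq_of_mem self_mem_nhdsWithin (fun lam hlam => (hkey lam hlam).symm)

end Final


/-- `g` is symmetric under simultaneous reordering of `σ` and `λ`, and for
fixed distinct (strictly decreasing) `σ` it extends continuously in `λ` to
coalescing points; at a point with all `λ_j = λ0` the extension is
`det(∂^{b_j}/∂λ^{b_j} e^{σ_i λ}|_{λ0}) / (∏_{i<j}(σ_i−σ_j) ∏_j b_j!)` with
`b_j = n − j`, i.e. `det(σ_i^{n−j} e^{σ_i λ0}) / (∏_{i<j}(σ_i−σ_j) ∏_j (n−j)!)`. -/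
theorem gFun_symm_and_tendsto {n : ℕ} (σ : Fin n → ℝ) (hσ : StrictAnti σ)
    (lam0 : ℝ) :
    (∀ (e : Equiv.Perm (Fin n)) (lam : Fin n → ℝ),
        gFun (σ ∘ e) (lam ∘ e) = gFun σ lam) ∧
    Filter.Tendsto (fun lam : Fin n → ℝ => gFun σ lam)
      (nhdsWithin (fun _ => lam0) {lam | Function.Injective lam})
      (nhds ((Matrix.det (Matrix.of fun i j : Fin n =>
          σ i ^ (n - 1 - (j : ℕ)) * Real.exp (σ i * lam0))) /
        (vdm σ * ∏ j : Fin n, (Nat.factorial (n - 1 - (j : ℕ)) : ℝ)))) := by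
  exact gFun_symm_and_tendsto' σ hσ lam0
end
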